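/- The data-braid completion db(w) of any data word w is a data braid: its minimum datum appears at the first position; in its ordered partition, each factor's data projection is a subsequence of the next factor's data projection; and the marked positions are exactly the first positions of factors, which carry the minimum datum. -/

import Mathlib

variable {A : Type*} {D : Type*} [LinearOrder D]

/-- The ordered partition of a data word: its factorization into maximal strictly
increasing (in the data component) factors. -/
def orderedPartition : List (A × D) → List (List (A × D))
  | [] => []
  | p :: rest =>
    match orderedPartition rest with
    | [] => [[p]]
    | b :: bs =>
      match b.head? with
      | some q => if p.2 < q.2 then (p :: b) :: bs else [p] :: b :: bs
      | none => [p] :: b :: bs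

/-- Complete a strictly increasing factor `b` with checkmark positions `(✓, d)` for
every required datum `d` (from `req`) missing in `b`, keeping data sorted. -/
def completeFactor (req : List D) (b : List (A × D)) : List ((A ⊕ Unit) × D) :=
  (List.insertionSort (· ≤ ·) (req ++ b.map Prod.snd).dedup).map (fun d =>
    match b.find? (fun p => decide (p.2 = d)) with
    | some p => (Sum.inl p.1, d)
    | none => (Sum.inr (), d))

/-- Complete all factors, cumulatively requiring every datum seen in earlier factors. -/
def dbFactors : List D → List (List (A × D)) → List (List ((A ⊕ Unit) × D))
  | _, [] => []
  | req, b :: bs => completeFactor req b :: dbFactors (req ++ b.map Prod.snd) bs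

/-- Mark (flag `true`) the first position of a factor. -/
def markFirst {β : Type*} : List (β × D) → List ((β × Bool) × D)
  | [] => []
  | p :: rest => ((p.1, true), p.2) :: rest.map (fun q => ((q.1, false), q.2))

/-- The data-braid completion `db w` of a data word `w`: insert `(✓, d_min)` at the
front of every factor not containing the minimum datum, insert `(✓, d)` into every
factor following one where `d` occurs, and mark the first position of each factor. -/
def db (w : List (A × D)) : List (((A ⊕ Unit) × Bool) × D) :=
  match w with
  | [] => []
  | p :: rest =>
    ((dbFactors [((p :: rest).map Prod.snd).foldl min p.2]
        (orderedPartition (p :: rest))).map markFirst).flatten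

/-- An ordered partition of a data word: a factorization into nonempty consecutive
factors, strictly increasing in the data component, such that the first datum of each
next factor is ≤ the last datum of the previous factor (maximality). -/
def IsOrderedPartition {B : Type*} (P : List (List (B × D))) (w : List (B × D)) : Prop :=
  P.flatten = w ∧
  (∀ b ∈ P, b ≠ []) ∧
  (∀ b ∈ P, (b.map Prod.snd).Chain' (· < ·)) ∧
  P.Chain' (fun b c => ∀ x ∈ (c.map Prod.snd).head?, ∀ y ∈ (b.map Prod.snd).getLast?, x ≤ y)

/-- A data braid w.r.t. a marking of the alphabet: the minimum datum appears at the
first position, the data projection of each factor of the ordered partition is a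
subsequence of that of the next factor, and the marked positions are exactly those
carrying the first datum. -/
def IsDataBraid {B : Type*} (marked : B → Prop) (w : List (B × D)) : Prop :=
  ∃ P : List (List (B × D)), IsOrderedPartition P w ∧
    (∀ d₁ ∈ (w.map Prod.snd).head?,
      (∀ p ∈ w, d₁ ≤ p.2) ∧ (∀ p ∈ w, marked p.1 ↔ p.2 = d₁)) ∧
    P.Chain' (fun b c => (b.map Prod.snd).Sublist (c.map Prod.snd))

set_option linter.unusedSectionVars false

lemma sublist_of_subset_of_sorted : ∀ {l₂ l₁ : List D}, l₁.Pairwise (· < ·) →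
    l₂.Pairwise (· < ·) → l₁ ⊆ l₂ → l₁.Sublist l₂
  | _, [], _, _, _ => List.nil_sublist _
  | [], b :: s, _, _, hsub => absurd (hsub (List.mem_cons_self)) List.not_mem_nil
  | a :: t, b :: s, h₁, h₂, hsub => by
    rcases eq_or_ne b a with rfl | hne
    · refine (sublist_of_subset_of_sorted (h₁.sublist (List.sublist_cons_self _ _))
        (h₂.sublist (List.sublist_cons_self _ _)) ?_).cons₂ b
      intro x hx
      have := hsub (List.mem_cons_of_mem _ hx)
      rcases List.mem_cons.1 this with rfl | h
      · exact absurd rfl (List.rel_of_pairwise_cons h₁ hx).ne'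
      · exact h
    · have hb : b ∈ t := by
        rcases List.mem_cons.1 (hsub (List.mem_cons_self)) with rfl | h
        · exact absurd rfl hne
        · exact h
      refine (sublist_of_subset_of_sorted h₁ (h₂.sublist (List.sublist_cons_self _ _)) ?_).cons a
      intro x hx
      rcases List.mem_cons.1 (hsub hx) with rfl | h
      · rcases List.mem_cons.1 hx with rfl | h'
        · exact absurd rfl hne
        · exact absurd rfl (lt_trans (List.rel_of_pairwise_cons h₂ hb)
            (List.rel_of_pairwise_cons h₁ h')).ne'
      · exact h

lemma completeFactor_map_snd (req : List D) (b : List (A × D)) :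
    (completeFactor req b).map Prod.snd
      = List.insertionSort (· ≤ ·) (req ++ b.map Prod.snd).dedup := by
  rw [completeFactor, List.map_map]
  convert List.map_id _
  ext d
  simp only [Function.comp_apply, id_eq]
  cases b.find? (fun p => decide (p.2 = d)) <;> rfl

lemma sortedData_pairwise (req : List D) (b : List (A × D)) :
    (List.insertionSort (· ≤ ·) (req ++ b.map Prod.snd).dedup).Pairwise (· < ·) := by
  have hs : (List.insertionSort (· ≤ ·) (req ++ b.map Prod.snd).dedup).Pairwise (· ≤ ·) :=
    List.pairwise_insertionSort _ _
  have hn : (List.insertionSort (· ≤ ·) (req ++ b.map Prod.snd).dedup).Nodup :=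
    (List.perm_insertionSort _ _).nodup_iff.2 (List.nodup_dedup _)
  exact (hs.and hn).imp (fun h => lt_of_le_of_ne h.1 h.2)

lemma mem_sortedData {req : List D} {b : List (A × D)} {d : D} :
    d ∈ List.insertionSort (· ≤ ·) (req ++ b.map Prod.snd).dedup ↔
      d ∈ req ++ b.map Prod.snd := by
  rw [(List.perm_insertionSort _ _).mem_iff, List.mem_dedup]

lemma foldl_min_le (l : List D) (a : D) : l.foldl min a ≤ a ∧ ∀ x ∈ l, l.foldl min a ≤ x := by
  induction l generalizing a with
  | nil => simp
  | cons y t ih =>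
    refine ⟨le_trans (ih (min a y)).1 (min_le_left _ _), ?_⟩
    intro x hx
    rcases List.mem_cons.1 hx with rfl | h
    · exact le_trans (ih (min a x)).1 (min_le_right _ _)
    · exact (ih (min a y)).2 x h

lemma orderedPartition_flatten (w : List (A × D)) : (orderedPartition w).flatten = w := by
  induction w with
  | nil => rfl
  | cons p rest ih =>
    rw [orderedPartition]
    rcases h : orderedPartition rest with _ | ⟨b, bs⟩ <;> rw [h] at ih
    · simp only [List.flatten]
      simp at ih
      simp [ih]
    · rcases hb : b.head? with _ | q <;> simp only [hb]
      · simpa [List.flatten] using ih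
      · split <;> simpa [List.flatten] using ih

lemma orderedPartition_ne_nil (p : A × D) (rest : List (A × D)) :
    orderedPartition (p :: rest) ≠ [] := by
  rw [orderedPartition]
  rcases orderedPartition rest with _ | ⟨b, bs⟩
  · simp
  · rcases hb : b.head? with _ | q <;> simp only [hb]
    · simp
    · split <;> simp

lemma markFirst_map_snd {β : Type*} (l : List (β × D)) :
    (markFirst l).map Prod.snd = l.map Prod.snd := by
  cases l with
  | nil => rfl
  | cons p t => simp [markFirst, List.map_map, Function.comp]

lemma markFirst_ne_nil {β : Type*} {l : List (β × D)} (h : l ≠ []) : markFirst l ≠ [] := by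
  cases l with
  | nil => exact absurd rfl h
  | cons p t => simp [markFirst]

lemma markFirst_spec {β : Type*} {l : List (β × D)} {m : D}
    (h0 : (l.map Prod.snd).head? = some m) (hch : (l.map Prod.snd).Pairwise (· < ·)) :
    ∀ p ∈ markFirst l, (p.1.2 = true ↔ p.2 = m) ∧ m ≤ p.2 := by
  cases l with
  | nil => simp [markFirst]
  | cons q t =>
    simp only [List.map_cons, List.head?_cons, Option.some.injEq] at h0
    intro p hp
    rcases List.mem_cons.1 hp with rfl | hp'
    · simp [h0.symm]
    · rcases List.mem_map.1 hp' with ⟨r, hr, rfl⟩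
      have hlt : m < r.2 := h0 ▸ List.rel_of_pairwise_cons hch (List.mem_map_of_mem hr)
      simp [hlt.ne', hlt.le]

lemma head?_eq_of_min {s : List D} {m : D} (hm : m ∈ s) (hall : ∀ x ∈ s, m ≤ x)
    (hp : s.Pairwise (· < ·)) : s.head? = some m := by
  cases s with
  | nil => cases hm
  | cons h t =>
    rcases List.mem_cons.1 hm with rfl | h'
    · rfl
    · exact absurd (hall h (List.mem_cons_self))
        (not_le.2 (List.rel_of_pairwise_cons hp h'))

lemma dbFactors_spec (m : D) : ∀ (bs : List (List (A × D))) (req : List D),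
    m ∈ req → (∀ d ∈ req, m ≤ d) → (∀ b ∈ bs, ∀ p ∈ b, m ≤ p.2) →
    (∀ c ∈ dbFactors req bs, (c.map Prod.snd).head? = some m ∧
      (c.map Prod.snd).Pairwise (· < ·) ∧ ∀ q ∈ c, m ≤ q.2) ∧
    (dbFactors req bs).Chain' (fun b c => (b.map Prod.snd).Sublist (c.map Prod.snd))
  | [], req, _, _, _ => by simp [dbFactors]; exact List.isChain_nil
  | b :: bs, req, hm, hreq, hbs => by
    have hreq' : ∀ d ∈ req ++ b.map Prod.snd, m ≤ d := by
      intro d hd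
      rcases List.mem_append.1 hd with h | h
      · exact hreq d h
      · rcases List.mem_map.1 h with ⟨q, hq, rfl⟩
        exact hbs b (List.mem_cons_self) q hq
    have hm' : m ∈ req ++ b.map Prod.snd := List.mem_append_left _ hm
    have hbs' : ∀ c ∈ bs, ∀ p ∈ c, m ≤ p.2 := fun c hc =>
      hbs c (List.mem_cons_of_mem _ hc)
    have IH := dbFactors_spec m bs (req ++ b.map Prod.snd) hm' hreq' hbs'
    have hSall : ∀ x ∈ (completeFactor req b).map Prod.snd, m ≤ x := by
      rw [completeFactor_map_snd]
      intro x hx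
      exact hreq' x (mem_sortedData.1 hx)
    have hSpair : ((completeFactor req b).map Prod.snd).Pairwise (· < ·) := by
      rw [completeFactor_map_snd]; exact sortedData_pairwise req b
    have hShead : ((completeFactor req b).map Prod.snd).head? = some m := by
      refine head?_eq_of_min ?_ hSall hSpair
      rw [completeFactor_map_snd]
      exact mem_sortedData.2 hm'
    constructor
    · intro c hc
      rcases List.mem_cons.1 hc with rfl | hc'
      · exact ⟨hShead, hSpair, fun q hq => hSall q.2 (List.mem_map_of_mem hq)⟩
      · exact IH.1 c hc'
    · rw [dbFactors, List.Chain', List.isChain_cons]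
      refine ⟨?_, IH.2⟩
      intro c hc
      cases bs with
      | nil => simp [dbFactors] at hc
      | cons b' bs' =>
        rw [dbFactors] at hc
        simp only [List.head?_cons, Option.mem_def, Option.some.injEq] at hc
        subst hc
        rw [completeFactor_map_snd, completeFactor_map_snd]
        refine sublist_of_subset_of_sorted (sortedData_pairwise req b)
          (sortedData_pairwise _ b') ?_
        intro x hx
        exact mem_sortedData.2 (List.mem_append_left _ (mem_sortedData.1 hx))

lemma mem_of_mem_getLast?' {β : Type*} {l : List β} {x : β} (h : x ∈ l.getLast?) : x ∈ l := by
  rcases List.mem_getLast?_eq_getLast h with ⟨hne, rfl⟩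
  exact List.getLast_mem hne

/-- The data-braid completion `db w` of any data word `w` is a data braid, with the
marked positions (those flagged `true`) exactly the positions carrying the minimum
datum, i.e. the first positions of the factors. -/
theorem db_isDataBraid (w : List (A × D)) :
    IsDataBraid (fun l => l.2 = true) (db w) := by
  cases w with
  | nil => exact ⟨[], ⟨rfl, by simp, by simp, List.isChain_nil⟩, by simp [db], List.isChain_nil⟩
  | cons p rest =>
    set m := ((p :: rest).map Prod.snd).foldl min p.2 with hm
    set L := dbFactors [m] (orderedPartition (p :: rest)) with hL
    have hmle : ∀ q ∈ (p :: rest : List (A × D)), m ≤ q.2 := fun q hq =>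
      (foldl_min_le _ _).2 q.2 (List.mem_map_of_mem hq)
    have hbs : ∀ b ∈ orderedPartition (p :: rest), ∀ q ∈ b, m ≤ q.2 := by
      intro b hb q hq
      exact hmle q (by
        rw [← orderedPartition_flatten (p :: rest)]
        exact List.mem_flatten.2 ⟨b, hb, hq⟩)
    have spec := dbFactors_spec m (orderedPartition (p :: rest)) [m]
      (List.mem_singleton_self m) (by simp) hbs
    rw [← hL] at spec
    -- membership transfer
    have hmem : ∀ c ∈ L.map markFirst, ∃ c' ∈ L, c = markFirst c' := by
      intro c hc
      rcases List.mem_map.1 hc with ⟨c', hc', rfl⟩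
      exact ⟨c', hc', rfl⟩
    have hmark : ∀ q ∈ db (p :: rest), (q.1.2 = true ↔ q.2 = m) ∧ m ≤ q.2 := by
      intro q hq
      have : db (p :: rest) = (L.map markFirst).flatten := rfl
      rw [this] at hq
      rcases List.mem_flatten.1 hq with ⟨c, hc, hqc⟩
      rcases hmem c hc with ⟨c', hc', rfl⟩
      obtain ⟨hhead, hpair, _⟩ := spec.1 c' hc'
      exact markFirst_spec hhead hpair q hqc
    -- head of db is m
    obtain ⟨b, bs, hOP⟩ : ∃ b bs, orderedPartition (p :: rest) = b :: bs := by
      rcases h : orderedPartition (p :: rest) with _ | ⟨b, bs⟩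
      · exact absurd h (orderedPartition_ne_nil p rest)
      · exact ⟨b, bs, rfl⟩
    have hLeq : L = completeFactor [m] b :: dbFactors ([m] ++ b.map Prod.snd) bs := by
      rw [hL, hOP, dbFactors]
    have hdbhead : ((db (p :: rest)).map Prod.snd).head? = some m := by
      obtain ⟨hhead, -, -⟩ := spec.1 (completeFactor [m] b)
        (by rw [hLeq]; exact List.mem_cons_self)
      cases hc : completeFactor [m] b with
      | nil => rw [hc] at hhead; simp at hhead
      | cons q t =>
        rw [hc, List.map_cons, List.head?_cons, Option.some.injEq] at hhead
        have : db (p :: rest) = (L.map markFirst).flatten := rfl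
        rw [this, hLeq, hc]
        simp [markFirst, hhead]
    refine ⟨L.map markFirst, ⟨rfl, ?_, ?_, ?_⟩, ?_, ?_⟩
    · intro c hc
      rcases hmem c hc with ⟨c', hc', rfl⟩
      obtain ⟨hhead, -, -⟩ := spec.1 c' hc'
      refine markFirst_ne_nil fun h => ?_
      rw [h] at hhead; simp at hhead
    · intro c hc
      rcases hmem c hc with ⟨c', hc', rfl⟩
      obtain ⟨-, hpair, -⟩ := spec.1 c' hc'
      rw [markFirst_map_snd]
      exact hpair.isChain
    · refine List.Pairwise.isChain (List.pairwise_of_forall_mem_list ?_)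
      intro c hc c₂ hc₂ x hx y hy
      rcases hmem c hc with ⟨c', hc', rfl⟩
      rcases hmem c₂ hc₂ with ⟨c₂', hc₂', rfl⟩
      rw [markFirst_map_snd] at hx hy
      obtain ⟨hhead₂, -, -⟩ := spec.1 c₂' hc₂'
      obtain ⟨-, -, hge⟩ := spec.1 c' hc'
      have hx' : x = m := by rw [hhead₂, Option.mem_def, Option.some.injEq] at hx; exact hx.symm ▸ rfl
      rcases List.mem_map.1 (mem_of_mem_getLast?' hy) with ⟨r, hr, rfl⟩
      rw [hx']
      exact hge r hr
    · intro d₁ hd₁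
      rw [hdbhead, Option.mem_def, Option.some.injEq] at hd₁
      subst hd₁
      exact ⟨fun q hq => (hmark q hq).2, fun q hq => (hmark q hq).1⟩
    · rw [List.Chain', List.isChain_map]
      exact spec.2.imp fun a c h => by rw [markFirst_map_snd, markFirst_map_snd]; exact h
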